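/- Under the recursive error-set construction of the previous context, if additionally the nominal states satisfy x̄_k ∈ X_k ⊖ E_k (Pontryagin difference) for all k, then the true states satisfy x_k ∈ X_k for all k = t, ..., t+T. -/
import Mathlib


open Pointwise

def pontryaginDiff {n : ℕ} (A B : Set (Fin n → ℝ)) : Set (Fin n → ℝ) :=
  {x | ∀ b ∈ B, x + b ∈ A}

theorem stmt7 {n m : ℕ} (t T : ℕ)
    (A : ℕ → (Fin n → ℝ) →ₗ[ℝ] (Fin n → ℝ)) (a : ℕ → Fin n → ℝ)
    (B : (Fin m → ℝ) →ₗ[ℝ] (Fin n → ℝ)) (u : ℕ → Fin m → ℝ)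
    (W : Set (Fin n → ℝ)) (S L : ℕ → Set (Fin n → ℝ))
    (E : ℕ → Set (Fin n → ℝ))
    (hE0 : E t = {0})
    (hErec : ∀ k, t ≤ k → k < t + T → E (k + 1) = (A k '' E k) + W + S k + L k)
    (x xbar : ℕ → Fin n → ℝ) (wbar : ℕ → Fin n → ℝ)
    (hw : ∀ k, t ≤ k → k < t + T → wbar k ∈ W + S k + L k)
    (hx : ∀ k, t ≤ k → k < t + T → x (k + 1) = a k + A k (x k) + B (u k) + wbar k)
    (hxbar : ∀ k, t ≤ k → k < t + T → xbar (k + 1) = a k + A k (xbar k) + B (u k))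
    (hinit : x t = xbar t)
    (X : ℕ → Set (Fin n → ℝ))
    (hconstr : ∀ k, t ≤ k → k ≤ t + T → xbar k ∈ pontryaginDiff (X k) (E k)) :
    ∀ k, t ≤ k → k ≤ t + T → x k ∈ X k := by
  have key : ∀ k, t ≤ k → k ≤ t + T → x k - xbar k ∈ E k := by
    intro k hk hk'
    induction k with
    | zero =>
        have : t = 0 := Nat.le_zero.mp hk
        subst this
        simp [hE0, hinit]
    | succ k ih =>
        rcases Nat.lt_or_ge k t with h | h
        · have : t = k + 1 := le_antisymm hk h
          rw [← this]
          simp [hE0, hinit]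
        · have hklt : k < t + T := Nat.lt_of_succ_le hk'
          have hmem : x k - xbar k ∈ E k := ih h (le_of_lt hklt)
          rw [hErec k h hklt]
          have hdiff : x (k + 1) - xbar (k + 1) = A k (x k - xbar k) + wbar k := by
            rw [hx k h hklt, hxbar k h hklt, map_sub]
            abel
          rw [hdiff]
          rcases hw k h hklt with ⟨ws, hws, l, hl, heq⟩
          rcases hws with ⟨w, hw', s, hs, heq2⟩
          simp only at heq heq2
          rw [← heq, ← heq2]
          have h1 : A k (x k - xbar k) ∈ A k '' E k := ⟨_, hmem, rfl⟩
          have : A k (x k - xbar k) + (w + s + l) =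
              A k (x k - xbar k) + w + s + l := by abel
          rw [this]
          exact Set.add_mem_add (Set.add_mem_add (Set.add_mem_add h1 hw') hs) hl
  intro k hk hk'
  have := hconstr k hk hk' (x k - xbar k) (key k hk hk')
  simpa using this
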